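/- arXiv:2009.14322 — 2 statements merged into one kernel-verified Lean document; each statement's English description precedes it below -/
import Mathlib

section
/- The iteration operator of the maybe monad satisfies the fixpoint law: for every f : X → (Y ⊎ X) ⊎ {⊥}, f† = [[inl, f†], inr] ∘ f, where f†(x₀) is defined by following the longest sequence x₀, x₁, … with f(xᵢ) = inl(inr xᵢ₊₁), returning inr ⊥ if this sequence is infinite or reaches f(xᵢ) = inr ⊥, and inl y if it terminates with f(xₙ) = inl(inl y). -/
attribute [local instance] Classical.propDecidable

/-- Kleisli lifting of the maybe monad `M X = X ⊎ {⊥}`. -/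
def mBind {X Y : Type} (f : X → Y ⊕ Unit) : X ⊕ Unit → Y ⊕ Unit :=
  Sum.elim f Sum.inr

/-- The chain `x₀, x₁, …` followed by iteration: `mChain f n x` is the `n`-th
element of the sequence determined by `f xᵢ = inl (inr xᵢ₊₁)`, if it exists. -/
def mChain {X Y : Type} (f : X → (Y ⊕ X) ⊕ Unit) : ℕ → X → Option X
  | 0, x => some x
  | n + 1, x =>
    match mChain f n x with
    | some x' =>
      match f x' with
      | Sum.inl (Sum.inr x'') => some x''
      | _ => none
    | none => none

/-- Iteration of the maybe monad: follow the longest sequence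
`x₀, x₁, …` with `f xᵢ = inl (inr xᵢ₊₁)`; return `inr ⊥` if it is infinite
or reaches `inr ⊥`, and `inl y` if it terminates with `f xₙ = inl (inl y)`. -/
noncomputable def mIter {X Y : Type} (f : X → (Y ⊕ X) ⊕ Unit) (x : X) : Y ⊕ Unit :=
  if h : ∃ n, ∃ x', ∃ y, mChain f n x = some x' ∧ f x' = Sum.inl (Sum.inl y) then
    Sum.inl h.choose_spec.choose_spec.choose
  else Sum.inr ()

lemma mChain_none_mono {X Y : Type} (f : X → (Y ⊕ X) ⊕ Unit) {n m : ℕ} {x : X}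
    (h : mChain f n x = none) (hnm : n ≤ m) : mChain f m x = none := by
  induction hnm with
  | refl => exact h
  | step _ ih => simp [mChain, ih]

lemma mIter_unique {X Y : Type} (f : X → (Y ⊕ X) ⊕ Unit) {n m : ℕ} {x a b : X} {y y' : Y}
    (ha : mChain f n x = some a) (hfa : f a = Sum.inl (Sum.inl y))
    (hb : mChain f m x = some b) (hfb : f b = Sum.inl (Sum.inl y')) : y = y' := by
  have key : ∀ {n m : ℕ} {a b : X} {y : Y}, n < m →
      mChain f n x = some a → f a = Sum.inl (Sum.inl y) →
      mChain f m x = some b → False := by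
    intro n m a b y hlt ha hfa hb
    have h1 : mChain f (n+1) x = none := by simp [mChain, ha, hfa]
    have := mChain_none_mono f h1 hlt
    simp [this] at hb
  rcases lt_trichotomy n m with h | h | h
  · exact (key h ha hfa hb).elim
  · subst h; rw [ha] at hb
    injection hb with hab; subst hab
    rw [hfa] at hfb
    exact Sum.inl.inj (Sum.inl.inj hfb)
  · exact (key h hb hfb ha).elim

lemma mIter_eq_inl {X Y : Type} (f : X → (Y ⊕ X) ⊕ Unit) {n : ℕ} {x a : X} {y : Y}
    (ha : mChain f n x = some a) (hfa : f a = Sum.inl (Sum.inl y)) :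
    mIter f x = Sum.inl y := by
  have h : ∃ n, ∃ x', ∃ y, mChain f n x = some x' ∧ f x' = Sum.inl (Sum.inl y) :=
    ⟨n, a, y, ha, hfa⟩
  rw [mIter, dif_pos h]
  have hs := h.choose_spec.choose_spec.choose_spec
  exact congrArg Sum.inl (mIter_unique f hs.1 hs.2 ha hfa)

lemma mChain_shift {X Y : Type} (f : X → (Y ⊕ X) ⊕ Unit) {x x' : X}
    (hf : f x = Sum.inl (Sum.inr x')) (n : ℕ) :
    mChain f (n + 1) x = mChain f n x' := by
  induction n with
  | zero => simp [mChain, hf]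
  | succ n ih => rw [mChain, ih]; rfl

/-- The iteration operator of the maybe monad satisfies the fixpoint law
`f† = [[inl, f†], inr] ∘ f`. -/
theorem maybe_iter_fixpoint {X Y : Type} (f : X → (Y ⊕ X) ⊕ Unit) :
    mIter f = Sum.elim (Sum.elim Sum.inl (mIter f)) Sum.inr ∘ f := by
  funext x
  rcases hf : f x with s | u
  · rcases s with y | x'
    · simp only [Function.comp_apply, hf, Sum.elim_inl]
      exact mIter_eq_inl f (n := 0) rfl hf
    · simp only [Function.comp_apply, hf, Sum.elim_inl, Sum.elim_inr]
      by_cases h : ∃ n, ∃ a, ∃ y, mChain f n x' = some a ∧ f a = Sum.inl (Sum.inl y)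
      · obtain ⟨n, a, y, ha, hfa⟩ := h
        rw [mIter_eq_inl f ha hfa]
        exact mIter_eq_inl f (n := n + 1) (by rw [mChain_shift f hf]; exact ha) hfa
      · have h' : ¬ ∃ n, ∃ a, ∃ y, mChain f n x = some a ∧ f a = Sum.inl (Sum.inl y) := by
          rintro ⟨n, a, y, ha, hfa⟩
          cases n with
          | zero =>
            simp [mChain] at ha; subst ha
            rw [hf] at hfa; exact (by simp at hfa)
          | succ m =>
            rw [mChain_shift f hf] at ha
            exact h ⟨m, a, y, ha, hfa⟩
        rw [mIter, dif_neg h', mIter, dif_neg h]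
  · simp only [Function.comp_apply, hf, Sum.elim_inr]
    have h' : ¬ ∃ n, ∃ a, ∃ y, mChain f n x = some a ∧ f a = Sum.inl (Sum.inl y) := by
      rintro ⟨n, a, y, ha, hfa⟩
      cases n with
      | zero =>
        simp [mChain] at ha; subst ha
        rw [hf] at hfa; exact (by simp at hfa)
      | succ m =>
        have h1 : mChain f 1 x = none := by simp [mChain, hf]
        have := mChain_none_mono f h1 (by omega : 1 ≤ m + 1)
        simp [this] at ha
    rw [mIter, dif_neg h']
end

section
/- The map ι : H_S X → X ⊎ (S ⊎ {⊥}) is a monad morphism from H_S to the exception monad (−) ⊎ (S ⊎ {⊥}): besides ι ∘ η = inl, for every f : X → H_S Y we have ι ∘ f⋆ = [ι ∘ f, inr] ∘ ι, where f⋆ is the Kleisli lifting of H_S (concatenation of trajectories, with divergence absorbing). -/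
noncomputable section

/-- Finite open trajectories over `S`: domain `[0, d)` with `d : ℝ≥0`. -/
def FTrj (S : Type) : Type := Σ d : NNReal, ({t : NNReal // t < d} → S)

/-- Closed trajectories over `S`: domain `[0, d]` with `d : ℝ≥0`. -/
def CTrj (S : Type) : Type := Σ d : NNReal, ({t : NNReal // t ≤ d} → S)

/-- Open trajectories over `S`: domain `[0, d)` with `d : [0,∞]`. -/
def OTrj (S : Type) : Type := Σ d : ENNReal, ({t : NNReal // (t : ENNReal) < d} → S)

/-- Divergent trajectories: closed-divergent or open-divergent. -/
def DTrj (S : Type) : Type := CTrj S ⊕ OTrj S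

/-- The monad `H_S X = (Σ_{I ∈ [0,ℝ≥0)} S^I × X) ⊎ (Σ_{I ∈ [0,∞]-downsets} S^I)`. -/
def HS (S X : Type) : Type := (FTrj S × X) ⊕ DTrj S

/-- The empty finite open trajectory. -/
def FTrj.eps (S : Type) : FTrj S :=
  ⟨0, fun t => absurd t.2 (by exact not_lt.mpr zero_le)⟩

/-- Unit of `H_S`: the empty trajectory paired with the return value. -/
def HS.eta {S X : Type} (x : X) : HS S X := Sum.inl (FTrj.eps S, x)

/-- The map `ι : H_S X → X ⊎ (S ⊎ {⊥})`. -/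
def HS.iota {S X : Type} : HS S X → X ⊕ (S ⊕ Unit)
  | Sum.inl (⟨d, e⟩, x) =>
      if h : 0 < d then Sum.inr (Sum.inl (e ⟨0, h⟩)) else Sum.inl x
  | Sum.inr (Sum.inl ⟨d, e⟩) => Sum.inr (Sum.inl (e ⟨0, (zero_le : (0 : NNReal) ≤ d)⟩))
  | Sum.inr (Sum.inr ⟨d, e⟩) =>
      if h : 0 < d then Sum.inr (Sum.inl (e ⟨0, by simpa using h⟩))
      else Sum.inr (Sum.inr ())

/-- Concatenation of finite open trajectories. -/
def FTrj.concat {S : Type} (p q : FTrj S) : FTrj S :=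
  ⟨p.1 + q.1, fun t =>
    if h : t.1 < p.1 then p.2 ⟨t.1, h⟩
    else q.2 ⟨t.1 - p.1, (tsub_lt_iff_left (not_lt.mp h)).mpr t.2⟩⟩

/-- Action of a finite open trajectory on a closed trajectory. -/
def FTrj.actC {S : Type} (p : FTrj S) (q : CTrj S) : CTrj S :=
  ⟨p.1 + q.1, fun t =>
    if h : t.1 < p.1 then p.2 ⟨t.1, h⟩
    else q.2 ⟨t.1 - p.1, tsub_le_iff_left.mpr t.2⟩⟩

/-- Action of a finite open trajectory on an open trajectory. -/
def FTrj.actO {S : Type} (p : FTrj S) (q : OTrj S) : OTrj S :=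
  ⟨(p.1 : ENNReal) + q.1, fun t =>
    if h : t.1 < p.1 then p.2 ⟨t.1, h⟩
    else q.2 ⟨t.1 - p.1, by
      have h2 := t.2
      rw [ENNReal.coe_sub]
      exact (ENNReal.sub_lt_iff_lt_right ENNReal.coe_ne_top
        (by exact_mod_cast not_lt.mp h)).mpr
        (h2.trans_le (add_comm ((p.1 : ENNReal)) q.1).le)⟩⟩

/-- Action of a finite open trajectory on a divergent trajectory. -/
def FTrj.actD {S : Type} (p : FTrj S) : DTrj S → DTrj S
  | Sum.inl c => Sum.inl (p.actC c)
  | Sum.inr o => Sum.inr (p.actO o)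

/-- Kleisli lifting of `H_S`: trajectory concatenation, divergence absorbing. -/
def HS.bind {S X Y : Type} (f : X → HS S Y) : HS S X → HS S Y
  | Sum.inl (m, x) =>
    match f x with
    | Sum.inl (n, y) => Sum.inl (m.concat n, y)
    | Sum.inr e => Sum.inr (m.actD e)
  | Sum.inr e => Sum.inr e

/-- `ι : H_S → (−) ⊎ (S ⊎ {⊥})` is a monad morphism into the exception
monad: `ι ∘ η = inl` and `ι ∘ f⋆ = [ι ∘ f, inr] ∘ ι`. -/
theorem iota_monad_morphism {S X Y : Type} (f : X → HS S Y) :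
    (∀ x : X, HS.iota (HS.eta (S := S) x) = Sum.inl x) ∧
    (∀ p : HS S X,
      HS.iota (HS.bind f p) = Sum.elim (fun x => HS.iota (f x)) Sum.inr (HS.iota p)) := by
  constructor
  · intro x
    simp [HS.eta, HS.iota, FTrj.eps]
  · rintro (⟨⟨d, e⟩, x⟩ | (⟨d, e⟩ | ⟨d, e⟩))
    · -- running case
      by_cases hd : 0 < d
      · -- trajectory nonempty: everything maps to e 0
        rcases hfx : f x with ⟨⟨d', e'⟩, y⟩ | (⟨d', e'⟩ | ⟨d', e'⟩) <;>
          simp only [HS.bind, hfx, HS.iota, FTrj.concat, FTrj.actD, FTrj.actC, FTrj.actO,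
            Sum.elim_inr, Sum.elim_inl]
        · rw [dif_pos hd, dif_pos (lt_of_lt_of_le hd le_self_add), dif_pos hd]; rfl
        · rw [dif_pos hd, dif_pos hd]; rfl
        · have h2 : (0 : ENNReal) < (d : ENNReal) + d' :=
            lt_of_lt_of_le (by exact_mod_cast hd) le_self_add
          rw [dif_pos hd, dif_pos h2, dif_pos (by exact_mod_cast hd)]; rfl
      · -- trajectory empty: d = 0
        have hd0 : d = 0 := le_antisymm (not_lt.mp hd) zero_le
        subst hd0
        rcases hfx : f x with ⟨⟨d', e'⟩, y⟩ | (⟨d', e'⟩ | ⟨d', e'⟩) <;>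
          simp only [HS.bind, hfx, HS.iota, FTrj.concat, FTrj.actD, FTrj.actC, FTrj.actO,
            Sum.elim_inr, Sum.elim_inl, dif_neg hd, zero_add]
        · by_cases h' : 0 < d'
          · rw [dif_pos h', dif_pos h']
            exact congrArg (fun t => Sum.inr (Sum.inl (e' t))) (Subtype.ext (tsub_zero 0))
          · rw [dif_neg h', dif_neg h']
        · exact congrArg (fun t => Sum.inr (Sum.inl (e' t))) (Subtype.ext (tsub_zero 0))
        · simp only [ENNReal.coe_zero, zero_add]
          by_cases h' : (0 : ENNReal) < d'
          · rw [dif_pos h', dif_pos h']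
            exact congrArg (fun t => Sum.inr (Sum.inl (e' t))) (Subtype.ext (tsub_zero 0))
          · rw [dif_neg h', dif_neg h']
    · simp [HS.bind, HS.iota]
    · by_cases h : (0 : ENNReal) < d <;>
        simp [HS.bind, HS.iota, h]
end
end
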